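/- Let G be a finite simple graph and let m : L_G → ℤ be a function on the bond lattice such that m(0̂) = 1 and for every π ∈ L_G, Σ_{0̂ ≤ σ ≤ π} (-1)^{l - |σ|} m(σ) q^{|σ|} = P(G(π), q), where G(π) is the disjoint union of the subgraphs induced by the blocks of π. Then for all π ∈ L_G, μ(0̂, π) = (-1)^{l - |π|} m(π). -/

import Mathlib

open Finset Polynomial
open scoped Classical

variable {V : Type} [Fintype V] [DecidableEq V]

/-- A bond-lattice element: a partition of the vertex set all of whose blocks
induce connected subgraphs. -/
def IsBondPartition (G : SimpleGraph V) (π : Finset (Finset V)) : Prop :=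
  (∀ v : V, ∃! B, B ∈ π ∧ v ∈ B) ∧
  ∀ B ∈ π, (G.induce (B : Set V)).Connected

noncomputable def bondFinset (G : SimpleGraph V) : Finset (Finset (Finset V)) :=
  Finset.univ.filter (IsBondPartition G)

/-- The partition of the vertex set into singletons. -/
def botPartition (V : Type) [Fintype V] [DecidableEq V] : Finset (Finset V) :=
  Finset.univ.image fun v => ({v} : Finset V)

/-- `Refines π σ` : every block of `π` is contained in some block of `σ`. -/
def Refines (π σ : Finset (Finset V)) : Prop :=
  ∀ B ∈ π, ∃ C ∈ σ, B ⊆ C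

/-- A polynomial is the chromatic polynomial of `G` if it counts proper colorings. -/
def IsChromaticPolynomial (G : SimpleGraph V) (P : Polynomial ℤ) : Prop :=
  ∀ n : ℕ, P.eval (n : ℤ) = Nat.card (G.Coloring (Fin n))

/-- Number of edges of `G` with both endpoints in `S`. -/
noncomputable def eIn (G : SimpleGraph V) (S : Finset V) : ℕ :=
  (Finset.univ.filter fun e : Sym2 V => e ∈ G.edgeSet ∧ ∀ v ∈ e, v ∈ S).card

/-- Number of edges of `G` with one endpoint in `S` and the other in `S'`. -/
noncomputable def eBetween (G : SimpleGraph V) (S S' : Finset V) : ℕ :=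
  (Finset.univ.filter fun e : Sym2 V =>
    e ∈ G.edgeSet ∧ ∃ a ∈ S, ∃ b ∈ S', e = s(a, b)).card

/-- `π` covers `π'` in the bond lattice. -/
def BondCovers (G : SimpleGraph V) (π π' : Finset (Finset V)) : Prop :=
  IsBondPartition G π ∧ IsBondPartition G π' ∧ Refines π' π ∧ π'.card = π.card + 1

/-- Number of non-singleton blocks. -/
def dcount (π : Finset (Finset V)) : ℕ := (π.filter fun B => 1 < B.card).card

/-- The weight of a covering edge `π → π'`: if `π'` splits the block `S` of `π`
into `S₁ ⊔ S₂`, this is `(1/d(π)) ⬝ e(S₁,S₂)/e(S)`. -/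
noncomputable def covWeight (G : SimpleGraph V) (π π' : Finset (Finset V)) : ℚ :=
  (1 / (dcount π : ℚ)) *
    ((∑ A ∈ π' \ π, ∑ B ∈ π' \ π, if A = B then 0 else (eBetween G A B : ℚ)) / 2) /
    (∑ S ∈ π \ π', (eIn G S : ℚ))

/-- The weight of a path: the product of the weights of its edges. -/
noncomputable def pathWeight (G : SimpleGraph V) : List (Finset (Finset V)) → ℚ
  | [] => 1
  | [_] => 1
  | a :: b :: rest => covWeight G a b * pathWeight G (b :: rest)

/-- `G(π)`: the graph on `V` whose edges are those edges of `G` with both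
endpoints in the same block of `π`. -/
def blockSubgraph (G : SimpleGraph V) (π : Finset (Finset V)) : SimpleGraph V where
  Adj a b := G.Adj a b ∧ ∃ B ∈ π, a ∈ B ∧ b ∈ B
  symm := ⟨fun a b h => ⟨h.1.symm, h.2.imp fun B hB => ⟨hB.1, hB.2.2, hB.2.1⟩⟩⟩
  loopless := ⟨fun a h => G.loopless.irrefl a h.1⟩


section Aux
variable {V : Type} [Fintype V] [DecidableEq V]

lemma blocks_nonempty {G : SimpleGraph V} {π : Finset (Finset V)}
    (h : IsBondPartition G π) {B : Finset V} (hB : B ∈ π) : B.Nonempty := by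
  obtain ⟨⟨x, hx⟩⟩ := (h.2 B hB).nonempty
  exact ⟨x, hx⟩

lemma refines_antisymm {G : SimpleGraph V} {π σ : Finset (Finset V)}
    (hπ : IsBondPartition G π) (hσ : IsBondPartition G σ)
    (h1 : Refines σ π) (h2 : Refines π σ) : σ = π := by
  have key : ∀ (τ ρ : Finset (Finset V)), IsBondPartition G τ → IsBondPartition G ρ →
      Refines τ ρ → Refines ρ τ → τ ⊆ ρ := by
    intro τ ρ hτ hρ hτρ hρτ B hB
    obtain ⟨C, hC, hBC⟩ := hτρ B hB
    obtain ⟨B', hB', hCB'⟩ := hρτ C hC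
    obtain ⟨v, hv⟩ := blocks_nonempty hτ hB
    have hvB' : v ∈ B' := hCB' (hBC hv)
    obtain ⟨D, _, hD⟩ := hτ.1 v
    have e1 : B = D := hD B ⟨hB, hv⟩
    have e2 : B' = D := hD B' ⟨hB', hvB'⟩
    have hBB' : B = B' := e1.trans e2.symm
    have hCB : C = B := subset_antisymm (hBB' ▸ hCB') hBC
    exact hCB ▸ hC
  exact subset_antisymm (key σ π hσ hπ h1 h2) (key π σ hπ hσ h2 h1)

lemma card_botPartition : (botPartition V).card = Fintype.card V := by
  rw [botPartition, Finset.card_image_of_injective _ (fun a b h => by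
    simpa using h), Finset.card_univ]

lemma eq_bot_of_all_singleton {G : SimpleGraph V} {π : Finset (Finset V)}
    (h : IsBondPartition G π) (hs : ∀ B ∈ π, B.card ≤ 1) : π = botPartition V := by
  ext S
  simp only [botPartition, Finset.mem_image, Finset.mem_univ, true_and]
  constructor
  · intro hS
    obtain ⟨v, hv⟩ := blocks_nonempty h hS
    refine ⟨v, ?_⟩
    exact (Finset.eq_singleton_iff_unique_mem.mpr ⟨hv, fun x hx =>
      Finset.card_le_one.mp (hs S hS) x hx v hv⟩).symm
  · rintro ⟨v, rfl⟩
    obtain ⟨B, ⟨hB, hvB⟩, _⟩ := h.1 v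
    have hBv : B = {v} := Finset.eq_singleton_iff_unique_mem.mpr
      ⟨hvB, fun x hx => Finset.card_le_one.mp (hs B hB) x hx v hvB⟩
    exact hBv ▸ hB

lemma exists_adj_of_connected {G : SimpleGraph V} {B : Finset V}
    (h : (G.induce (B : Set V)).Connected)
    {a b : V} (ha : a ∈ B) (hb : b ∈ B) (hab : a ≠ b) :
    ∃ x ∈ B, ∃ y ∈ B, G.Adj x y := by
  obtain ⟨w⟩ := h.preconnected ⟨a, by simpa using ha⟩ ⟨b, by simpa using hb⟩
  cases w with
  | nil => exact absurd rfl hab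
  | cons hadj _ =>
    rename_i c _
    exact ⟨a, ha, c.1, by simpa using c.2, hadj⟩

lemma refines_refl (π : Finset (Finset V)) : Refines π π :=
  fun B hB => ⟨B, hB, subset_rfl⟩

lemma refines_trans {τ σ π : Finset (Finset V)}
    (h1 : Refines τ σ) (h2 : Refines σ π) : Refines τ π := by
  intro B hB
  obtain ⟨C, hC, hBC⟩ := h1 B hB
  obtain ⟨D, hD, hCD⟩ := h2 C hC
  exact ⟨D, hD, hBC.trans hCD⟩

lemma mem_bondFinset {G : SimpleGraph V} {π : Finset (Finset V)} :
    π ∈ bondFinset G ↔ IsBondPartition G π := by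
  simp [bondFinset]

end Aux

/-- If `m : L_G → ℤ` satisfies `m(0̂) = 1` and
`∑_{0̂ ≤ σ ≤ π} (-1)^{l-|σ|} m(σ) q^{|σ|} = P(G(π), q)` for every `π ∈ L_G`,
then `μ(0̂, π) = (-1)^{l-|π|} m(π)` for all `π ∈ L_G`. -/
theorem mobius_eq_of_chromatic_sums
    (G : SimpleGraph V)
    (mu : Finset (Finset V) → ℤ)
    (hmu0 : mu (botPartition V) = 1)
    (hmu : ∀ π ∈ bondFinset G, π ≠ botPartition V →
      ∑ σ ∈ (bondFinset G).filter (fun σ => Refines σ π), mu σ = 0)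
    (m : Finset (Finset V) → ℤ)
    (hm0 : m (botPartition V) = 1)
    (hm : ∀ π ∈ bondFinset G,
      IsChromaticPolynomial (blockSubgraph G π)
        (∑ σ ∈ (bondFinset G).filter (fun σ => Refines σ π),
          Polynomial.C ((-1 : ℤ) ^ (Fintype.card V - σ.card) * m σ) *
            Polynomial.X ^ σ.card)) :
    ∀ π ∈ bondFinset G, mu π = (-1 : ℤ) ^ (Fintype.card V - π.card) * m π := by
  classical
  -- The m-side satisfies the same recursion as mu, via evaluation at q = 1.
  have hmsum : ∀ π ∈ bondFinset G, π ≠ botPartition V →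
      ∑ σ ∈ (bondFinset G).filter (fun σ => Refines σ π),
        (-1 : ℤ) ^ (Fintype.card V - σ.card) * m σ = 0 := by
    intro π hπ hne
    have hπ' : IsBondPartition G π := mem_bondFinset.mp hπ
    obtain ⟨B, hB, hcard⟩ : ∃ B ∈ π, 1 < B.card := by
      by_contra h
      push_neg at h
      exact hne (eq_bot_of_all_singleton hπ' h)
    obtain ⟨a, ha, b, hb, hab⟩ := Finset.one_lt_card.mp hcard
    obtain ⟨x, hx, y, hy, hadj⟩ := exists_adj_of_connected (hπ'.2 B hB) ha hb hab
    have hedge : (blockSubgraph G π).Adj x y := ⟨hadj, B, hB, hx, hy⟩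
    have hempty : IsEmpty ((blockSubgraph G π).Coloring (Fin 1)) :=
      ⟨fun c => (c.valid hedge) (Subsingleton.elim _ _)⟩
    have heval := hm π hπ 1
    rw [Nat.card_of_isEmpty, Polynomial.eval_finset_sum] at heval
    simpa using heval
  -- Strong induction on the size of the lower interval.
  have key : ∀ n : ℕ, ∀ π ∈ bondFinset G,
      ((bondFinset G).filter (fun σ => Refines σ π)).card ≤ n →
      mu π = (-1 : ℤ) ^ (Fintype.card V - π.card) * m π := by
    intro n
    induction n with
    | zero =>
      intro π hπ hcard
      have hπs : π ∈ (bondFinset G).filter (fun σ => Refines σ π) :=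
        Finset.mem_filter.mpr ⟨hπ, refines_refl π⟩
      have := Finset.card_pos.mpr ⟨π, hπs⟩
      omega
    | succ n ih =>
      intro π hπ hcard
      by_cases hbot : π = botPartition V
      · subst hbot
        rw [hmu0, hm0, card_botPartition, Nat.sub_self, pow_zero, mul_one]
      · have h1 := hmu π hπ hbot
        have h2 := hmsum π hπ hbot
        set s := (bondFinset G).filter (fun σ => Refines σ π) with hs
        have hπs : π ∈ s := Finset.mem_filter.mpr ⟨hπ, refines_refl π⟩
        rw [← Finset.add_sum_erase _ _ hπs] at h1 h2
        have hz : ∀ σ ∈ s.erase π, mu σ = (-1 : ℤ) ^ (Fintype.card V - σ.card) * m σ := by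
          intro σ hσ
          have hσ' := Finset.mem_of_mem_erase hσ
          have hσne := Finset.ne_of_mem_erase hσ
          have hσb : σ ∈ bondFinset G := (Finset.mem_filter.mp hσ').1
          have href : Refines σ π := (Finset.mem_filter.mp hσ').2
          apply ih σ hσb
          have hsub : (bondFinset G).filter (fun τ => Refines τ σ) ⊆ s.erase π := by
            intro τ hτ
            have hτb := (Finset.mem_filter.mp hτ).1
            have hτσ := (Finset.mem_filter.mp hτ).2
            refine Finset.mem_erase.mpr ⟨?_, Finset.mem_filter.mpr ⟨hτb, refines_trans hτσ href⟩⟩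
            rintro rfl
            exact hσne (refines_antisymm (mem_bondFinset.mp hπ) (mem_bondFinset.mp hσb)
              href hτσ)
          have hc1 := Finset.card_le_card hsub
          have hc2 : (s.erase π).card = s.card - 1 := Finset.card_erase_of_mem hπs
          omega
        have hsum : ∑ σ ∈ s.erase π, mu σ
            = ∑ σ ∈ s.erase π, (-1 : ℤ) ^ (Fintype.card V - σ.card) * m σ :=
          Finset.sum_congr rfl hz
        linarith
  intro π hπ
  exact key _ π hπ le_rfl
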